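/- Let κ ≥ 2 be real and define F_κ(X) = ∑_{k≥2} I_κ(X/k) for X > 0, where I_κ is the modified Bessel function of the first kind. Then for all X ≥ 1, F_κ(X) ≤ 4·√(X/π)·e^{X/2}. -/

import Mathlib

open Real MeasureTheory

/-- The modified Bessel function of the first kind, via its integral
representation valid for `κ > -1/2`. -/
noncomputable def besselI (κ x : ℝ) : ℝ :=
  (x / 2) ^ κ / (Real.Gamma (κ + 1 / 2) * Real.sqrt π) *
    ∫ t in (-1 : ℝ)..1, (1 - t ^ 2) ^ (κ - 1 / 2) * Real.exp (x * t)

namespace BesselAux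

lemma cont_integrand (p x : ℝ) (hp : 0 ≤ p) :
    Continuous (fun t : ℝ => (1 - t ^ 2) ^ p * Real.exp (x * t)) := by
  exact ((continuous_const.sub (continuous_pow 2)).rpow_const
    (fun t => Or.inr hp)).mul (Real.continuous_exp.comp (continuous_const.mul continuous_id))

lemma cont_integrand2 (p x : ℝ) (hp : 0 ≤ p) :
    Continuous (fun t : ℝ => (2 * (1 - t)) ^ p * Real.exp (x * t)) := by
  exact ((continuous_const.mul (continuous_const.sub continuous_id)).rpow_const
    (fun t => Or.inr hp)).mul (Real.continuous_exp.comp (continuous_const.mul continuous_id))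

lemma integrand_nonneg {p x t : ℝ} (ht : t ∈ Set.Icc (-1:ℝ) 1) :
    0 ≤ (1 - t ^ 2) ^ p * Real.exp (x * t) := by
  apply mul_nonneg (Real.rpow_nonneg ?_ _) (Real.exp_pos _).le
  nlinarith [ht.1, ht.2]

lemma besselI_nonneg {κ x : ℝ} (hκ : 2 ≤ κ) (hx : 0 ≤ x) : 0 ≤ besselI κ x := by
  apply mul_nonneg
  · apply div_nonneg (Real.rpow_nonneg (by linarith) _)
    exact mul_nonneg (Real.Gamma_nonneg_of_nonneg (by linarith)) (Real.sqrt_nonneg _)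
  · exact intervalIntegral.integral_nonneg (by norm_num) fun t ht => integrand_nonneg ht

lemma one_le_Gamma {s : ℝ} (hs : 2 ≤ s) : 1 ≤ Real.Gamma s := by
  rcases eq_or_lt_of_le hs with h | h
  · rw [← h, Real.Gamma_two]
  · rw [← Real.Gamma_two]
    exact (Real.Gamma_strictMonoOn_Ici (by norm_num) (by simpa using hs) h).le

lemma besselI_le_crude {κ x : ℝ} (hκ : 2 ≤ κ) (hx : 0 < x) (hx1 : x ≤ 1) :
    besselI κ x ≤ Real.exp 1 * x ^ 2 / (2 * Real.sqrt π) := by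
  have hp : (0:ℝ) ≤ κ - 1/2 := by linarith
  have hJ : (∫ t in (-1:ℝ)..1, (1 - t ^ 2) ^ (κ - 1/2) * Real.exp (x * t))
      ≤ 2 * Real.exp x := by
    have h1 : (∫ t in (-1:ℝ)..1, (1 - t ^ 2) ^ (κ - 1/2) * Real.exp (x * t))
        ≤ ∫ _t in (-1:ℝ)..1, Real.exp x := by
      apply intervalIntegral.integral_mono_on (by norm_num)
        ((cont_integrand _ x hp).intervalIntegrable _ _)
        (intervalIntegrable_const)
      intro t ht
      calc (1 - t ^ 2) ^ (κ - 1/2) * Real.exp (x * t)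
          ≤ 1 * Real.exp x := by
            apply mul_le_mul
            · exact Real.rpow_le_one (by nlinarith [ht.1, ht.2]) (by nlinarith [ht.1, ht.2]) hp
            · exact Real.exp_le_exp.2 (by nlinarith [ht.2])
            · exact (Real.exp_pos _).le
            · norm_num
        _ = Real.exp x := one_mul _
    rw [intervalIntegral.integral_const] at h1
    convert h1 using 2 <;> norm_num
  have hpref : 0 ≤ (x/2) ^ κ / (Real.Gamma (κ + 1/2) * Real.sqrt π) := by
    apply div_nonneg (Real.rpow_nonneg (by linarith) _)
    exact mul_nonneg (Real.Gamma_nonneg_of_nonneg (by linarith)) (Real.sqrt_nonneg _)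
  have h2 : besselI κ x ≤ (x/2) ^ κ / (Real.Gamma (κ + 1/2) * Real.sqrt π) * (2 * Real.exp x) :=
    mul_le_mul_of_nonneg_left hJ hpref
  refine h2.trans ?_
  have hG : 1 ≤ Real.Gamma (κ + 1/2) := one_le_Gamma (by linarith)
  have hsπ : 0 < Real.sqrt π := Real.sqrt_pos.2 Real.pi_pos
  have hx2 : (x/2) ^ κ ≤ (x/2) ^ (2:ℝ) :=
    Real.rpow_le_rpow_of_exponent_ge (by linarith) (by linarith) hκ
  have hx2' : (x/2) ^ (2:ℝ) = (x/2) ^ (2:ℕ) := by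
    rw [← Real.rpow_natCast]; norm_num
  have hdiv : (x/2) ^ κ / (Real.Gamma (κ + 1/2) * Real.sqrt π)
      ≤ (x/2) ^ (2:ℕ) / (1 * Real.sqrt π) := by
    apply div_le_div₀ (by positivity) (by rw [← hx2']; exact hx2) (by positivity)
    exact mul_le_mul_of_nonneg_right hG hsπ.le
  have hexp : 2 * Real.exp x ≤ 2 * Real.exp 1 := by
    have := Real.exp_le_exp.2 hx1; linarith
  calc (x/2) ^ κ / (Real.Gamma (κ + 1/2) * Real.sqrt π) * (2 * Real.exp x)
      ≤ (x/2) ^ (2:ℕ) / (1 * Real.sqrt π) * (2 * Real.exp 1) := by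
        apply mul_le_mul hdiv hexp (by positivity) (by positivity)
    _ = Real.exp 1 * x ^ 2 / (2 * Real.sqrt π) := by
        field_simp
  
lemma J_le_sharp {p x : ℝ} (hp : 0 < p) (hx : 0 < x) :
    (∫ t in (-1:ℝ)..1, (1 - t ^ 2) ^ p * Real.exp (x * t))
      ≤ Real.exp x * (2 ^ p * Real.Gamma (p + 1) / x ^ (p + 1)) := by
  have step1 : (∫ t in (-1:ℝ)..1, (1 - t ^ 2) ^ p * Real.exp (x * t))
      ≤ ∫ t in (-1:ℝ)..1, (2 * (1 - t)) ^ p * Real.exp (x * t) := by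
    apply intervalIntegral.integral_mono_on (by norm_num)
      ((cont_integrand p x hp.le).intervalIntegrable _ _)
      ((cont_integrand2 p x hp.le).intervalIntegrable _ _)
    intro t ht
    apply mul_le_mul_of_nonneg_right _ (Real.exp_pos _).le
    apply Real.rpow_le_rpow (by nlinarith [ht.1, ht.2]) (by nlinarith [ht.1, ht.2]) hp.le
  have step2 : (∫ t in (-1:ℝ)..1, (2 * (1 - t)) ^ p * Real.exp (x * t))
      = ∫ s in (0:ℝ)..2, (2 * s) ^ p * Real.exp (x * (1 - s)) := by
    have := intervalIntegral.integral_comp_sub_left (a := (-1:ℝ)) (b := 1)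
      (fun s => (2 * s) ^ p * Real.exp (x * (1 - s))) 1
    norm_num at this
    rw [← this]
  have step3 : (∫ s in (0:ℝ)..2, (2 * s) ^ p * Real.exp (x * (1 - s)))
      = Real.exp x * ∫ s in (0:ℝ)..2, (2 * s) ^ p * Real.exp (-(x * s)) := by
    rw [← intervalIntegral.integral_const_mul]
    apply intervalIntegral.integral_congr
    intro t _
    simp only [mul_left_comm, ← Real.exp_add]
    ring_nf
  have hIoi : IntegrableOn (fun s : ℝ => (2 * s) ^ p * Real.exp (-(x * s))) (Set.Ioi 0) := by
    have base : IntegrableOn (fun s : ℝ => s ^ p * Real.exp (-(x * s))) (Set.Ioi 0) := by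
      have h := integrableOn_rpow_mul_exp_neg_mul_rpow (s := p) (p := 1) (b := x)
        (by linarith) one_pos hx
      refine h.congr_fun ?_ measurableSet_Ioi
      intro t ht
      simp only [Real.rpow_one]
      ring_nf
    have h2 : IntegrableOn (fun s : ℝ => (2:ℝ) ^ p * (s ^ p * Real.exp (-(x * s))))
        (Set.Ioi 0) := base.const_mul ((2:ℝ) ^ p)
    refine h2.congr_fun ?_ measurableSet_Ioi
    intro t ht
    have hmul : ((2:ℝ) * t) ^ p = 2 ^ p * t ^ p :=
      Real.mul_rpow (by norm_num) (le_of_lt (Set.mem_Ioi.mp ht))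
    simp only [hmul]
    ring
  have step4 : (∫ s in (0:ℝ)..2, (2 * s) ^ p * Real.exp (-(x * s)))
      ≤ ∫ s in Set.Ioi (0:ℝ), (2 * s) ^ p * Real.exp (-(x * s)) := by
    rw [intervalIntegral.integral_of_le (by norm_num)]
    apply setIntegral_mono_set hIoi
    · refine Filter.eventually_of_mem (self_mem_ae_restrict measurableSet_Ioi) ?_
      intro t ht
      exact mul_nonneg (Real.rpow_nonneg (by simp at ht; linarith) _) (Real.exp_pos _).le
    · exact (Set.Ioc_subset_Ioi_self).eventuallyLE
  have step5 : (∫ s in Set.Ioi (0:ℝ), (2 * s) ^ p * Real.exp (-(x * s)))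
      = 2 ^ p * ((1 / x) ^ (p + 1) * Real.Gamma (p + 1)) := by
    rw [← Real.integral_rpow_mul_exp_neg_mul_Ioi (by linarith : (0:ℝ) < p + 1) hx,
      ← MeasureTheory.integral_const_mul]
    apply setIntegral_congr_fun measurableSet_Ioi
    intro t ht
    have hmul : ((2:ℝ) * t) ^ p = 2 ^ p * t ^ p :=
      Real.mul_rpow (by norm_num) (le_of_lt (Set.mem_Ioi.mp ht))
    simp only [hmul, show p + 1 - 1 = p by ring]
    ring
  have hfin : 2 ^ p * ((1 / x) ^ (p + 1) * Real.Gamma (p + 1))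
      = 2 ^ p * Real.Gamma (p + 1) / x ^ (p + 1) := by
    rw [Real.div_rpow (by norm_num) hx.le, Real.one_rpow]
    ring
  calc (∫ t in (-1:ℝ)..1, (1 - t ^ 2) ^ p * Real.exp (x * t))
      ≤ ∫ s in (0:ℝ)..2, (2 * s) ^ p * Real.exp (x * (1 - s)) := by
        rw [← step2]; exact step1
    _ = Real.exp x * ∫ s in (0:ℝ)..2, (2 * s) ^ p * Real.exp (-(x * s)) := step3
    _ ≤ Real.exp x * (2 ^ p * ((1 / x) ^ (p + 1) * Real.Gamma (p + 1))) := by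
        apply mul_le_mul_of_nonneg_left _ (Real.exp_pos _).le
        rw [← step5]; exact step4
    _ = Real.exp x * (2 ^ p * Real.Gamma (p + 1) / x ^ (p + 1)) := by rw [hfin]

lemma besselI_le_sharp {κ x : ℝ} (hκ : 2 ≤ κ) (hx : 0 < x) :
    besselI κ x ≤ Real.exp x / (Real.sqrt 2 * Real.sqrt π * Real.sqrt x) := by
  have hp : (0:ℝ) < κ - 1/2 := by linarith
  have hG : (0:ℝ) < Real.Gamma (κ + 1/2) := Real.Gamma_pos_of_pos (by linarith)
  have hsπ : (0:ℝ) < Real.sqrt π := Real.sqrt_pos.2 Real.pi_pos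
  have hpref : 0 ≤ (x/2) ^ κ / (Real.Gamma (κ + 1/2) * Real.sqrt π) := by positivity
  have h2 := mul_le_mul_of_nonneg_left (J_le_sharp hp hx) hpref
  have heq : (κ - 1/2) + 1 = κ + 1/2 := by ring
  refine le_trans h2 (le_of_eq ?_)
  rw [heq]
  rw [Real.div_rpow hx.le (by norm_num : (0:ℝ) ≤ 2),
    Real.rpow_sub (by norm_num : (0:ℝ) < 2),
    Real.rpow_add hx, Real.sqrt_eq_rpow 2, Real.sqrt_eq_rpow π, Real.sqrt_eq_rpow x]
  have h1 : x ^ κ ≠ 0 := ne_of_gt (Real.rpow_pos_of_pos hx _)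
  have h2' : (2:ℝ) ^ κ ≠ 0 := ne_of_gt (Real.rpow_pos_of_pos (by norm_num) _)
  have h3 : x ^ (1/2:ℝ) ≠ 0 := ne_of_gt (Real.rpow_pos_of_pos hx _)
  have h4 : (2:ℝ) ^ (1/2:ℝ) ≠ 0 := ne_of_gt (Real.rpow_pos_of_pos (by norm_num) _)
  field_simp

lemma sqrt6_le : Real.sqrt 6 ≤ 2.4495 := by
  rw [show (2.4495:ℝ) = Real.sqrt (2.4495^2) from (Real.sqrt_sq (by norm_num)).symm]
  exact Real.sqrt_le_sqrt (by norm_num)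

lemma le_sqrt_pi : (1.772:ℝ) ≤ Real.sqrt π := by
  rw [show (1.772:ℝ) = Real.sqrt (1.772^2) from (Real.sqrt_sq (by norm_num)).symm]
  exact Real.sqrt_le_sqrt (by nlinarith [Real.pi_gt_d2])

/-- `X² ≤ √6 · √X · e^{X/2}` for `X ≥ 0`. -/
lemma sq_le_sqrt_exp {X : ℝ} (hX : 0 ≤ X) :
    X ^ 2 ≤ Real.sqrt 6 * (Real.sqrt X * Real.exp (X / 2)) := by
  have h1 : X ^ 3 / 6 ≤ Real.exp X := by
    have h := Real.sum_le_exp_of_nonneg hX 4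
    rw [Finset.sum_range_succ, Finset.sum_range_succ, Finset.sum_range_succ,
      Finset.sum_range_succ] at h
    norm_num [Nat.factorial] at h
    nlinarith [h, pow_nonneg hX 2, hX]
  have h2 : Real.sqrt (X ^ 3 / 6) ≤ Real.exp (X / 2) := by
    rw [Real.exp_half]
    exact Real.sqrt_le_sqrt h1
  have h3 : Real.sqrt 6 * (Real.sqrt X * Real.sqrt (X ^ 3 / 6)) = X ^ 2 := by
    rw [← Real.sqrt_mul hX, ← Real.sqrt_mul (by norm_num : (0:ℝ) ≤ 6)]
    rw [show 6 * (X * (X ^ 3 / 6)) = (X ^ 2) ^ 2 by ring]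
    exact Real.sqrt_sq (by positivity)
  calc X ^ 2 = Real.sqrt 6 * (Real.sqrt X * Real.sqrt (X ^ 3 / 6)) := h3.symm
    _ ≤ Real.sqrt 6 * (Real.sqrt X * Real.exp (X / 2)) := by
        apply mul_le_mul_of_nonneg_left _ (Real.sqrt_nonneg _)
        exact mul_le_mul_of_nonneg_left h2 (Real.sqrt_nonneg _)

lemma exp_two_le : Real.exp 2 ≤ 7.3890561001 := by
  have h := Real.exp_one_lt_d9
  rw [show (2:ℝ) = 1 + 1 by norm_num, Real.exp_add]
  have h1 : Real.exp 1 * Real.exp 1 ≤ 2.7182818286 * 2.7182818286 :=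
    mul_le_mul h.le h.le (Real.exp_pos 1).le (by norm_num)
  nlinarith [h1]

/-- Key cubic bound: `k³ e² ≤ (243/8) eᵏ` for `k ≥ 2`. -/
lemma cubic_bound {k : ℝ} (hk : 2 ≤ k) : k ^ 3 * Real.exp 2 ≤ 243 / 8 * Real.exp k := by
  have h := Real.sum_le_exp_of_nonneg (by linarith : (0:ℝ) ≤ k) 5
  rw [Finset.sum_range_succ, Finset.sum_range_succ, Finset.sum_range_succ,
    Finset.sum_range_succ, Finset.sum_range_succ] at h
  norm_num [Nat.factorial] at h
  have h2 := exp_two_le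
  nlinarith [h, h2, mul_le_mul_of_nonneg_left h2 (by positivity : (0:ℝ) ≤ k ^ 3),
    mul_nonneg (sub_nonneg.2 hk) (by positivity : (0:ℝ) ≤ k ^ 3), Real.exp_pos k]

lemma key_bound {κ X : ℝ} (hκ : 2 ≤ κ) (hX : 1 ≤ X) {k : ℕ} (hk : 2 ≤ k) :
    besselI κ (X / k) ≤ (9 / 4 * Real.sqrt X * Real.exp (X / 2)) / (k:ℝ) ^ 2 := by
  have hk2 : (2:ℝ) ≤ (k:ℝ) := by exact_mod_cast hk
  have hkpos : (0:ℝ) < (k:ℝ) := by linarith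
  have hXpos : (0:ℝ) < X := by linarith
  have hxpos : 0 < X / (k:ℝ) := div_pos hXpos hkpos
  have hS : (0:ℝ) ≤ Real.sqrt X * Real.exp (X / 2) := by positivity
  by_cases hcase : X ≤ (k:ℝ)
  · -- small argument: crude bound
    have h1 : X / (k:ℝ) ≤ 1 := (div_le_one hkpos).mpr hcase
    refine (besselI_le_crude hκ hxpos h1).trans ?_
    have hE := sq_le_sqrt_exp hXpos.le
    have hmain : Real.exp 1 * X ^ 2 / (2 * Real.sqrt π) ≤ 9 / 4 * (Real.sqrt X * Real.exp (X / 2)) := by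
      rw [div_le_iff₀ (by positivity)]
      have c1 : Real.exp 1 * X ^ 2 ≤ Real.exp 1 * (Real.sqrt 6 * (Real.sqrt X * Real.exp (X / 2))) :=
        mul_le_mul_of_nonneg_left hE (Real.exp_pos 1).le
      have c2 : Real.exp 1 ≤ 2.7182818286 := Real.exp_one_lt_d9.le
      nlinarith [c1, c2, sqrt6_le, le_sqrt_pi, hS, Real.exp_pos 1,
        mul_nonneg hS (Real.sqrt_nonneg 6)]
    calc Real.exp 1 * (X / (k:ℝ)) ^ 2 / (2 * Real.sqrt π)
        = (Real.exp 1 * X ^ 2 / (2 * Real.sqrt π)) / (k:ℝ) ^ 2 := by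
          field_simp
      _ ≤ (9 / 4 * (Real.sqrt X * Real.exp (X / 2))) / (k:ℝ) ^ 2 := by
          exact (div_le_div_iff_of_pos_right (by positivity)).mpr hmain
      _ = (9 / 4 * Real.sqrt X * Real.exp (X / 2)) / (k:ℝ) ^ 2 := by ring_nf
  · -- large argument: sharp bound
    push_neg at hcase
    refine (besselI_le_sharp hκ hxpos).trans ?_
    set kr := (k:ℝ)
    -- squared inequality
    have goal2 : Real.exp (2 * (X / kr)) * kr ^ 5 ≤ 81 / 8 * π * X ^ 2 * Real.exp X := by
      have hA : Real.exp (2 * (X / kr)) ≤ Real.exp X * Real.exp (2 - kr) := by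
        rw [← Real.exp_add]
        apply Real.exp_le_exp.2
        rw [show 2 * (X / kr) = 2 * X / kr by ring, div_le_iff₀ hkpos]
        nlinarith [mul_nonneg (sub_nonneg.2 hk2) (sub_nonneg.2 hcase.le)]
      have hB : kr ^ 3 * Real.exp (2 - kr) ≤ 243 / 8 := by
        rw [Real.exp_sub, ← mul_div_assoc, div_le_iff₀ (Real.exp_pos kr)]
        exact cubic_bound hk2
      have hC : kr ^ 5 * Real.exp (2 - kr) ≤ 81 / 8 * π * X ^ 2 := by
        have e1 : kr ^ 5 * Real.exp (2 - kr) = kr ^ 2 * (kr ^ 3 * Real.exp (2 - kr)) := by ring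
        rw [e1]
        have e2 : kr ^ 2 * (kr ^ 3 * Real.exp (2 - kr)) ≤ kr ^ 2 * (243 / 8) :=
          mul_le_mul_of_nonneg_left hB (by positivity)
        have e3 : kr ^ 2 ≤ X ^ 2 := by nlinarith [hcase.le]
        nlinarith [Real.pi_gt_three, e2, e3]
      calc Real.exp (2 * (X / kr)) * kr ^ 5
          ≤ (Real.exp X * Real.exp (2 - kr)) * kr ^ 5 :=
            mul_le_mul_of_nonneg_right hA (by positivity)
        _ = Real.exp X * (kr ^ 5 * Real.exp (2 - kr)) := by ring
        _ ≤ Real.exp X * (81 / 8 * π * X ^ 2) :=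
            mul_le_mul_of_nonneg_left hC (Real.exp_pos X).le
        _ = 81 / 8 * π * X ^ 2 * Real.exp X := by ring
    -- now deduce the unsquared inequality
    have ha : (0:ℝ) ≤ Real.exp (X / kr) / (Real.sqrt 2 * Real.sqrt π * Real.sqrt (X / kr)) := by
      positivity
    have hb : (0:ℝ) ≤ (9 / 4 * Real.sqrt X * Real.exp (X / 2)) / kr ^ 2 := by positivity
    have hsq : (Real.exp (X / kr) / (Real.sqrt 2 * Real.sqrt π * Real.sqrt (X / kr))) ^ 2
        ≤ ((9 / 4 * Real.sqrt X * Real.exp (X / 2)) / kr ^ 2) ^ 2 := by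
      have d1 : (Real.sqrt 2 * Real.sqrt π * Real.sqrt (X / kr)) ^ 2 = 2 * π * (X / kr) := by
        rw [mul_pow, mul_pow, Real.sq_sqrt (by norm_num : (0:ℝ) ≤ 2),
          Real.sq_sqrt Real.pi_pos.le, Real.sq_sqrt hxpos.le]
      have d2 : (9 / 4 * Real.sqrt X * Real.exp (X / 2)) ^ 2 = 81 / 16 * X * Real.exp X := by
        rw [mul_pow, mul_pow, Real.sq_sqrt hXpos.le, pow_two (Real.exp (X / 2)),
          ← Real.exp_add]
        norm_num
      have d3 : Real.exp (X / kr) ^ 2 = Real.exp (2 * (X / kr)) := by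
        rw [pow_two, ← Real.exp_add]; ring_nf
      rw [div_pow, div_pow, d1, d2, d3]
      rw [div_le_div_iff₀ (by positivity) (by positivity)]
      have hq : 81 / 16 * X * Real.exp X * (2 * π * (X / kr)) * kr
          = 81 / 8 * π * X ^ 2 * Real.exp X := by
        field_simp; ring
      rw [← mul_le_mul_iff_of_pos_right hkpos, hq]
      calc Real.exp (2 * (X / kr)) * (kr ^ 2) ^ 2 * kr
          = Real.exp (2 * (X / kr)) * kr ^ 5 := by ring
        _ ≤ 81 / 8 * π * X ^ 2 * Real.exp X := goal2
    calc Real.exp (X / kr) / (Real.sqrt 2 * Real.sqrt π * Real.sqrt (X / kr))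
        = Real.sqrt ((Real.exp (X / kr) / (Real.sqrt 2 * Real.sqrt π * Real.sqrt (X / kr))) ^ 2) :=
          (Real.sqrt_sq ha).symm
      _ ≤ Real.sqrt (((9 / 4 * Real.sqrt X * Real.exp (X / 2)) / kr ^ 2) ^ 2) :=
          Real.sqrt_le_sqrt hsq
      _ = (9 / 4 * Real.sqrt X * Real.exp (X / 2)) / kr ^ 2 := Real.sqrt_sq hb

end BesselAux

theorem sum_besselI_le (κ : ℝ) (hκ : 2 ≤ κ) (X : ℝ) (hX : 1 ≤ X) :
    (∑' k : ℕ, if 2 ≤ k then besselI κ (X / k) else 0) ≤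
      4 * Real.sqrt (X / π) * Real.exp (X / 2) := by
  classical
  have hXpos : (0:ℝ) < X := by linarith
  set M : ℝ := 9 / 4 * Real.sqrt X * Real.exp (X / 2) with hMdef
  have hM0 : 0 ≤ M := by positivity
  set h : ℕ → ℝ := fun k => if 2 ≤ k then 1 / (k:ℝ) ^ 2 else 0 with hh
  have hh0 : ∀ k, 0 ≤ h k := by
    intro k
    simp only [hh]
    split
    · positivity
    · exact le_refl 0
  have hpart : ∀ n, ∑ i ∈ Finset.range n, h i ≤ 1 := by
    have key : ∀ n : ℕ, ∑ i ∈ Finset.range (n + 2), h i ≤ 1 - 1 / ((n:ℝ) + 1) := by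
      intro n
      induction n with
      | zero =>
        norm_num [hh, Finset.sum_range_succ]
      | succ m ih =>
        rw [show m + 1 + 2 = (m + 2) + 1 by ring, Finset.sum_range_succ]
        have hv : h (m + 2) = 1 / ((m:ℝ) + 2) ^ 2 := by
          simp only [hh]
          rw [if_pos (by omega)]
          push_cast
          ring_nf
        rw [hv]
        have hm1 : (0:ℝ) < (m:ℝ) + 1 := by positivity
        have hm2 : (0:ℝ) < (m:ℝ) + 2 := by positivity
        have e1 : 1 / ((m:ℝ) + 1) - 1 / ((m:ℝ) + 2) = 1 / (((m:ℝ) + 1) * ((m:ℝ) + 2)) := by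
          field_simp
          ring
        have e2 : 1 / ((m:ℝ) + 2) ^ 2 ≤ 1 / (((m:ℝ) + 1) * ((m:ℝ) + 2)) := by
          apply one_div_le_one_div_of_le (by positivity)
          nlinarith
        push_cast
        have e3 : 1 / ((m:ℝ) + 1 + 1) = 1 / ((m:ℝ) + 2) := by ring_nf
        linarith [ih, e2, e1.ge, e1.le, e3.le, e3.ge]
    intro n
    rcases le_or_gt n 1 with hn | hn
    · interval_cases n <;> norm_num [hh, Finset.sum_range_succ]
    · obtain ⟨m, rfl⟩ : ∃ m, n = m + 2 := ⟨n - 2, by omega⟩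
      refine (key m).trans ?_
      have : (0:ℝ) < 1 / ((m:ℝ) + 1) := by positivity
      linarith
  have hsum : Summable h := summable_of_sum_range_le hh0 hpart
  have htsum : (∑' k, h k) ≤ 1 := Real.tsum_le_of_sum_range_le hh0 hpart
  have hfg : ∀ k : ℕ, (if 2 ≤ k then besselI κ (X / k) else 0) ≤ M * h k := by
    intro k
    by_cases hk : 2 ≤ k
    · rw [if_pos hk]
      simp only [hh]
      rw [if_pos hk]
      have := BesselAux.key_bound hκ hX hk
      calc besselI κ (X / k) ≤ M / (k:ℝ) ^ 2 := this
        _ = M * (1 / (k:ℝ) ^ 2) := by ring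
    · rw [if_neg hk]
      simp only [hh]
      rw [if_neg hk, mul_zero]
  have hf0 : ∀ k : ℕ, 0 ≤ (if 2 ≤ k then besselI κ (X / k) else 0) := by
    intro k
    split
    · exact BesselAux.besselI_nonneg hκ (by positivity)
    · exact le_refl 0
  have hgsum : Summable (fun k => M * h k) := hsum.mul_left M
  have hfsum : Summable (fun k : ℕ => if 2 ≤ k then besselI κ (X / k) else 0) :=
    Summable.of_nonneg_of_le hf0 hfg hgsum
  have hle : (∑' k : ℕ, if 2 ≤ k then besselI κ (X / k) else 0) ≤ ∑' k, M * h k :=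
    Summable.tsum_le_tsum hfg hfsum hgsum
  refine hle.trans ?_
  rw [tsum_mul_left]
  have hM1 : M * (∑' k, h k) ≤ M := by
    have := mul_le_mul_of_nonneg_left htsum hM0
    simpa using this
  refine hM1.trans ?_
  rw [Real.sqrt_div hXpos.le]
  have hsπpos : (0:ℝ) < Real.sqrt π := Real.sqrt_pos.2 Real.pi_pos
  have hπ : Real.sqrt π ≤ 16 / 9 := by
    rw [show (16/9:ℝ) = Real.sqrt ((16/9) ^ 2) from (Real.sqrt_sq (by norm_num)).symm]
    exact Real.sqrt_le_sqrt (by nlinarith [Real.pi_lt_d2])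
  have hstep : 9 / 4 * Real.sqrt X ≤ 4 * (Real.sqrt X / Real.sqrt π) := by
    rw [show 4 * (Real.sqrt X / Real.sqrt π) = 4 * Real.sqrt X / Real.sqrt π by ring,
      le_div_iff₀ hsπpos]
    nlinarith [mul_le_mul_of_nonneg_left hπ (Real.sqrt_nonneg X), Real.sqrt_nonneg X]
  calc M = (9 / 4 * Real.sqrt X) * Real.exp (X / 2) := by rw [hMdef]
    _ ≤ (4 * (Real.sqrt X / Real.sqrt π)) * Real.exp (X / 2) :=
        mul_le_mul_of_nonneg_right hstep (Real.exp_pos _).le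
    _ = 4 * (Real.sqrt X / Real.sqrt π) * Real.exp (X / 2) := by ring
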